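/- Let n ≥ 1 be a natural number, z > 0 and α > 1 real constants, and let j ≥ 1 be a real number. Set b := n(z+1), c0 := √(b·e^{α−1}·(e^{α−1} − 1/j)) and C_j := −log(c0)/(α−1), and for r ∈ ℝ set h_j(r) := e^{-r²/j} + C_j. Then for every real r, ( e^{h_j(r)·(α−1)}·b − e^{-h_j(r)·(α−1)} ) / b ≤ 1/(j·c0). -/

import Mathlib

theorem lemma_three_ii (n : ℕ) (hn : 1 ≤ n) (z α j : ℝ) (hz : 0 < z) (hα : 1 < α)
    (hj : 1 ≤ j) (b c0 Cj : ℝ) (hb : b = n * (z + 1))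
    (hc0 : c0 = Real.sqrt (b * Real.exp (α - 1) * (Real.exp (α - 1) - 1 / j)))
    (hCj : Cj = -Real.log c0 / (α - 1))
    (h : ℝ → ℝ) (hh : ∀ r, h r = Real.exp (-r ^ 2 / j) + Cj) :
    ∀ r : ℝ,
      (Real.exp (h r * (α - 1)) * b - Real.exp (-(h r * (α - 1)))) / b ≤ 1 / (j * c0) := by
  intro r
  have ha : 0 < α - 1 := by linarith
  have hjpos : (0:ℝ) < j := by linarith
  have hbpos : 0 < b := by
    rw [hb]
    have h1 : (1:ℝ) ≤ (n:ℝ) := by exact_mod_cast hn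
    nlinarith
  set A : ℝ := Real.exp (α - 1) with hA_def
  have hA1 : 1 < A := by
    have := Real.add_one_le_exp (α - 1)
    rw [hA_def]; linarith
  have hd : 0 < A - 1 / j := by
    have : 1 / j ≤ 1 := by
      rw [div_le_one hjpos]; exact hj
    linarith
  have hprod : 0 < b * A * (A - 1 / j) := by positivity
  have hc0pos : 0 < c0 := by rw [hc0]; exact Real.sqrt_pos.mpr hprod
  have hc0sq : c0 ^ 2 = b * A * (A - 1 / j) := by
    rw [hc0, Real.sq_sqrt hprod.le]
  set t : ℝ := Real.exp (-r ^ 2 / j) with ht_def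
  have ht0 : 0 < t := Real.exp_pos _
  have ht1 : t ≤ 1 := by
    rw [ht_def, Real.exp_le_one_iff]
    apply div_nonpos_of_nonpos_of_nonneg
    · nlinarith [sq_nonneg r]
    · positivity
  set E : ℝ := Real.exp (t * (α - 1)) with hE_def
  have hE1 : 1 ≤ E := Real.one_le_exp (by positivity)
  have hEA : E ≤ A := by
    rw [hE_def, hA_def]
    exact Real.exp_le_exp.mpr (by nlinarith)
  have hhr : h r * (α - 1) = t * (α - 1) - Real.log c0 := by
    rw [hh r, hCj, ← ht_def]
    field_simp
    ring
  have e1 : Real.exp (h r * (α - 1)) = E / c0 := by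
    rw [hhr, Real.exp_sub, Real.exp_log hc0pos]
  have e2 : Real.exp (-(h r * (α - 1))) = c0 / E := by
    rw [hhr, neg_sub, Real.exp_sub, Real.exp_log hc0pos, hE_def]
  rw [e1, e2]
  rw [div_le_div_iff₀ hbpos (by positivity : (0:ℝ) < j * c0)]
  have key : (E ^ 2 * b - c0 ^ 2) * j ≤ b * E := by
    have h2 : (0:ℝ) ≤ j * (A + E) - 1 := by nlinarith
    have h3 : c0 ^ 2 * j = b * A * (A * j - 1) := by
      rw [hc0sq]; field_simp
    nlinarith [mul_nonneg hbpos.le (mul_nonneg (sub_nonneg.mpr hEA) h2), h3]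
  have hEne : E ≠ 0 := by positivity
  have hc0ne : c0 ≠ 0 := ne_of_gt hc0pos
  have expand : (E / c0 * b - c0 / E) * (j * c0) = (E ^ 2 * b - c0 ^ 2) * j / E := by
    field_simp
  rw [expand, one_mul, div_le_iff₀ (by positivity : (0:ℝ) < E)]
  calc (E ^ 2 * b - c0 ^ 2) * j ≤ b * E := key
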